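/- For the Lq-loss ℓ(y, y') = |y - y'|^q with q > 1 and y, y' ∈ [-B, B], the infimum over -B ≤ y₁ < y < y₂ ≤ B of (q-1)(y₂-y₁) / (q(y-y₁)(y₂-y)[(y-y₁)^{q-1} + (y₂-y)^{q-1}]) equals ((q-1)/(q(2B)^q)) · inf_{0<t<1} 1/(t(1-t)(t^{q-1} + (1-t)^{q-1})), and for 1 < q ≤ 2 this infimum equals (q-1)/(qB^q), attained at t = 1/2. -/

import Mathlib

open Real

private lemma lq_key (q : ℝ) {d t : ℝ} (hq : 1 < q) (hd : 0 < d) (ht : 0 < t) (ht1 : t < 1) :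
    (q - 1) * d / (q * (t * d) * ((1 - t) * d) * ((t * d) ^ (q - 1) + ((1 - t) * d) ^ (q - 1)))
      = ((q - 1) / (q * d ^ q)) * (1 / (t * (1 - t) * (t ^ (q - 1) + (1 - t) ^ (q - 1)))) := by
  have h1 : (0:ℝ) < 1 - t := by linarith
  have hq0 : (0:ℝ) < q := by linarith
  rw [Real.mul_rpow ht.le hd.le, Real.mul_rpow h1.le hd.le]
  have hdq : d ^ q = d ^ (q - 1) * d := by
    rw [← Real.rpow_add_one hd.ne' (q-1)]; ring_nf
  have htp : (0:ℝ) < t ^ (q-1) := Real.rpow_pos_of_pos ht _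
  have h1p : (0:ℝ) < (1-t) ^ (q-1) := Real.rpow_pos_of_pos h1 _
  have hdp : (0:ℝ) < d ^ (q-1) := Real.rpow_pos_of_pos hd _
  rw [hdq]
  field_simp

private lemma lq_concave {q t : ℝ} (hq : 1 < q) (hq2 : q ≤ 2) (ht : 0 < t) (ht1 : t < 1) :
    t ^ (q - 1) + (1 - t) ^ (q - 1) ≤ 2 * (1/2 : ℝ) ^ (q - 1) := by
  have h1 : (0:ℝ) < 1 - t := by linarith
  have hcon := Real.concaveOn_rpow (by linarith : (0:ℝ) ≤ q - 1) (by linarith : q - 1 ≤ 1)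
  have h := hcon.2 (Set.mem_Ici.2 ht.le) (Set.mem_Ici.2 h1.le)
      (by norm_num : (0:ℝ) ≤ 1/2) (by norm_num : (0:ℝ) ≤ 1/2) (by norm_num)
  simp only [smul_eq_mul] at h
  have he : (1/2 : ℝ) * t + 1/2 * (1 - t) = 1/2 := by ring
  rw [he] at h
  linarith

theorem lq_eta_infimum (q B : ℝ) (hq : 1 < q) (hB : 0 < B) :
    sInf {v : ℝ | ∃ y₁ y y₂ : ℝ, -B ≤ y₁ ∧ y₁ < y ∧ y < y₂ ∧ y₂ ≤ B ∧
        v = (q - 1) * (y₂ - y₁) /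
          (q * (y - y₁) * (y₂ - y) * ((y - y₁) ^ (q - 1) + (y₂ - y) ^ (q - 1)))} =
      ((q - 1) / (q * (2 * B) ^ q)) *
        sInf {w : ℝ | ∃ t : ℝ, 0 < t ∧ t < 1 ∧
          w = 1 / (t * (1 - t) * (t ^ (q - 1) + (1 - t) ^ (q - 1)))} ∧
    (q ≤ 2 →
      sInf {w : ℝ | ∃ t : ℝ, 0 < t ∧ t < 1 ∧
          w = 1 / (t * (1 - t) * (t ^ (q - 1) + (1 - t) ^ (q - 1)))} =
        1 / ((1 / 2 : ℝ) * (1 - 1 / 2) *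
          ((1 / 2 : ℝ) ^ (q - 1) + (1 - 1 / 2 : ℝ) ^ (q - 1))) ∧
      sInf {v : ℝ | ∃ y₁ y y₂ : ℝ, -B ≤ y₁ ∧ y₁ < y ∧ y < y₂ ∧ y₂ ≤ B ∧
        v = (q - 1) * (y₂ - y₁) /
          (q * (y - y₁) * (y₂ - y) * ((y - y₁) ^ (q - 1) + (y₂ - y) ^ (q - 1)))} =
        (q - 1) / (q * B ^ q)) := by
  have hq0 : (0:ℝ) < q := by linarith
  set W := {w : ℝ | ∃ t : ℝ, 0 < t ∧ t < 1 ∧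
      w = 1 / (t * (1 - t) * (t ^ (q - 1) + (1 - t) ^ (q - 1)))} with hWdef
  set V := {v : ℝ | ∃ y₁ y y₂ : ℝ, -B ≤ y₁ ∧ y₁ < y ∧ y < y₂ ∧ y₂ ≤ B ∧
      v = (q - 1) * (y₂ - y₁) /
        (q * (y - y₁) * (y₂ - y) * ((y - y₁) ^ (q - 1) + (y₂ - y) ^ (q - 1)))} with hVdef
  set c : ℝ := (q - 1) / (q * (2 * B) ^ q) with hcdef
  have hden : ∀ t : ℝ, 0 < t → t < 1 →
      0 < t * (1 - t) * (t ^ (q - 1) + (1 - t) ^ (q - 1)) := by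
    intro t ht ht1
    have h1 : (0:ℝ) < 1 - t := by linarith
    have h2 : (0:ℝ) < t ^ (q-1) := Real.rpow_pos_of_pos ht _
    have h3 : (0:ℝ) < (1-t) ^ (q-1) := Real.rpow_pos_of_pos h1 _
    positivity
  have hWpos : ∀ w ∈ W, 0 < w := by
    rintro w ⟨t, ht, ht1, rfl⟩
    exact one_div_pos.2 (hden t ht ht1)
  have hWbdd : BddBelow W := ⟨0, fun w hw => (hWpos w hw).le⟩
  have hWhalf : (1 : ℝ) / ((1/2) * (1 - 1/2) * ((1/2:ℝ) ^ (q - 1) + (1 - 1/2:ℝ) ^ (q - 1))) ∈ W :=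
    ⟨1/2, by norm_num, by norm_num, rfl⟩
  have hWne : W.Nonempty := ⟨_, hWhalf⟩
  have h2B : (0:ℝ) < (2*B) ^ q := Real.rpow_pos_of_pos (by linarith) _
  have hc : 0 < c := div_pos (by linarith) (by positivity)
  have hmemV : ∀ t : ℝ, 0 < t → t < 1 →
      c * (1 / (t * (1 - t) * (t ^ (q - 1) + (1 - t) ^ (q - 1)))) ∈ V := by
    intro t ht ht1
    refine ⟨-B, -B + t * (2*B), B, le_refl _, by nlinarith, by nlinarith, le_refl _, ?_⟩
    rw [show (-B + t * (2*B)) - (-B) = t * (2*B) from by ring,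
        show B - (-B + t * (2*B)) = (1 - t) * (2*B) from by ring,
        show B - (-B) = 2*B from by ring]
    exact (lq_key q hq (by linarith : (0:ℝ) < 2*B) ht ht1).symm
  have hlbV : ∀ v ∈ V, c * sInf W ≤ v := by
    rintro v ⟨y₁, y, y₂, hy₁, h12, h23, hy₂, rfl⟩
    have hd : 0 < y₂ - y₁ := by linarith
    set t : ℝ := (y - y₁) / (y₂ - y₁) with htdef
    have ht : 0 < t := div_pos (by linarith) hd
    have ht1 : t < 1 := (div_lt_one hd).2 (by linarith)
    have e1 : t * (y₂ - y₁) = y - y₁ := div_mul_cancel₀ _ hd.ne'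
    have e2 : (1 - t) * (y₂ - y₁) = y₂ - y := by
      rw [sub_mul, e1]; ring
    have hkey := lq_key q hq hd ht ht1
    rw [e1, e2] at hkey
    rw [hkey]
    have hw : 1 / (t * (1 - t) * (t ^ (q - 1) + (1 - t) ^ (q - 1))) ∈ W := ⟨t, ht, ht1, rfl⟩
    have h1 : sInf W ≤ 1 / (t * (1 - t) * (t ^ (q - 1) + (1 - t) ^ (q - 1))) := csInf_le hWbdd hw
    have hdq : (y₂ - y₁) ^ q ≤ (2*B) ^ q :=
      Real.rpow_le_rpow hd.le (by linarith) hq0.le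
    have h2 : c ≤ (q - 1) / (q * (y₂ - y₁) ^ q) := by
      rw [hcdef]
      gcongr
    have hwp : 0 < 1 / (t * (1 - t) * (t ^ (q - 1) + (1 - t) ^ (q - 1))) :=
      one_div_pos.2 (hden t ht ht1)
    calc c * sInf W ≤ c * (1 / (t * (1 - t) * (t ^ (q - 1) + (1 - t) ^ (q - 1)))) :=
          mul_le_mul_of_nonneg_left h1 hc.le
      _ ≤ ((q - 1) / (q * (y₂ - y₁) ^ q)) *
            (1 / (t * (1 - t) * (t ^ (q - 1) + (1 - t) ^ (q - 1)))) :=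
          mul_le_mul_of_nonneg_right h2 hwp.le
  have hVne : V.Nonempty := ⟨_, hmemV (1/2) (by norm_num) (by norm_num)⟩
  have hVbdd : BddBelow V := ⟨c * sInf W, hlbV⟩
  have hfirst : sInf V = c * sInf W := by
    apply le_antisymm
    · have hlb : ∀ w ∈ W, sInf V / c ≤ w := by
        rintro w ⟨t, ht, ht1, rfl⟩
        rw [div_le_iff₀ hc]
        calc sInf V ≤ c * (1 / (t * (1 - t) * (t ^ (q - 1) + (1 - t) ^ (q - 1)))) :=
              csInf_le hVbdd (hmemV t ht ht1)
          _ = (1 / (t * (1 - t) * (t ^ (q - 1) + (1 - t) ^ (q - 1)))) * c := by ring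
      have h := le_csInf hWne hlb
      rw [div_le_iff₀ hc] at h
      linarith [h]
    · exact le_csInf hVne hlbV
  refine ⟨hfirst, fun hq2 => ?_⟩
  have hsecond : sInf W = 1 / ((1/2 : ℝ) * (1 - 1/2) *
      ((1/2 : ℝ) ^ (q - 1) + (1 - 1/2 : ℝ) ^ (q - 1))) := by
    apply le_antisymm (csInf_le hWbdd hWhalf)
    apply le_csInf hWne
    rintro w ⟨t, ht, ht1, rfl⟩
    have hdt : 0 < t * (1 - t) * (t ^ (q - 1) + (1 - t) ^ (q - 1)) := hden t ht ht1
    apply one_div_le_one_div_of_le hdt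
    have hsum := lq_concave hq hq2 ht ht1
    have htt : t * (1 - t) ≤ 1/4 := by nlinarith [sq_nonneg (2*t - 1)]
    have hsum0 : (0:ℝ) ≤ t ^ (q - 1) + (1 - t) ^ (q - 1) := by
      have := Real.rpow_pos_of_pos ht (q-1)
      have := Real.rpow_pos_of_pos (show (0:ℝ) < 1 - t by linarith) (q-1)
      linarith
    calc t * (1 - t) * (t ^ (q - 1) + (1 - t) ^ (q - 1))
        ≤ (1/4) * (2 * (1/2:ℝ) ^ (q - 1)) := mul_le_mul htt hsum hsum0 (by norm_num)
      _ = (1/2 : ℝ) * (1 - 1/2) * ((1/2 : ℝ) ^ (q - 1) + (1 - 1/2 : ℝ) ^ (q - 1)) := by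
          rw [show (1 - 1/2 : ℝ) = 1/2 from by norm_num]; ring
  refine ⟨hsecond, ?_⟩
  rw [hfirst, hsecond, hcdef]
  have h2Bq : (2*B : ℝ) ^ q = 2 ^ q * B ^ q := Real.mul_rpow (by norm_num) hB.le
  have hhalfq : (1/2 : ℝ) * (1 - 1/2) * ((1/2 : ℝ) ^ (q - 1) + (1 - 1/2 : ℝ) ^ (q - 1))
      = ((2:ℝ) ^ q)⁻¹ := by
    rw [show (1 - 1/2 : ℝ) = 1/2 from by norm_num]
    have h1 : (1/2 : ℝ) ^ (q-1) * (1/2) = (1/2 : ℝ) ^ q := by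
      rw [← Real.rpow_add_one (by norm_num : (1/2:ℝ) ≠ 0) (q-1)]
      ring_nf
    have h2 : (1/2 : ℝ) ^ q = ((2:ℝ) ^ q)⁻¹ := by
      rw [show (1/2 : ℝ) = 2⁻¹ from by norm_num, Real.inv_rpow (by norm_num : (0:ℝ) ≤ 2)]
    rw [← h2, ← h1]; ring
  rw [h2Bq, hhalfq, one_div, inv_inv]
  have h2q : (0:ℝ) < (2:ℝ) ^ q := Real.rpow_pos_of_pos (by norm_num) _
  have hBq : (0:ℝ) < B ^ q := Real.rpow_pos_of_pos hB _
  field_simp
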